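/- Let S₁ and S₂ be unitary commutative semirings (commutative semirings with multiplicative unit). Then for every congruence Θ on S₁ × S₂ the kernel [(0,0)]Θ is directly decomposable, i.e., [(0,0)]Θ = π₁([(0,0)]Θ) × π₂([(0,0)]Θ). -/
import Mathlib


theorem stmt_16 {S₁ S₂ : Type*} [CommSemiring S₁] [CommSemiring S₂]
    (Θ : RingCon (S₁ × S₂)) :
    {x : S₁ × S₂ | Θ x (0, 0)} =
      (Prod.fst '' {x : S₁ × S₂ | Θ x (0, 0)}) ×ˢ
        (Prod.snd '' {x : S₁ × S₂ | Θ x (0, 0)}) := by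
  ext ⟨a, b⟩
  constructor
  · intro h
    exact ⟨⟨(a, b), h, rfl⟩, ⟨(a, b), h, rfl⟩⟩
  · rintro ⟨⟨⟨a', b'⟩, h1, rfl⟩, ⟨⟨a'', b''⟩, h2, rfl⟩⟩
    have ha : Θ ((a', b') * (1, 0)) ((0, 0) * (1, 0)) := Θ.mul h1 (Θ.refl _)
    have hb : Θ ((a'', b'') * (0, 1)) ((0, 0) * (0, 1)) := Θ.mul h2 (Θ.refl _)
    simp only [Prod.mk_mul_mk, mul_one, mul_zero, zero_mul] at ha hb
    have := Θ.add ha hb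
    simpa using this
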